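/- Let σ be a linear extension of a finite poset R and let x, y ∈ R. Then Ech_σ(x) = y if and only if there exist functions ρ : Pre_σ(x) → ℂ and β : Suc_σ(y) → ℂ such that: (i) ρ(x) ≠ 0; (ii) β(y) ≠ 0; (iii) ∑_{w ∈ Pre_σ(x), w ≤ y} ρ(w) ≠ 0; (iv) ∑_{w ∈ Suc_σ(y), w ≥ x} β(w) ≠ 0; (v) for every u ∈ Suc_σ(y) with u ≠ y, ∑_{w ∈ Pre_σ(x), w ≤ u} ρ(w) = 0; (vi) for every v ∈ Pre_σ(x) with v ≠ x, ∑_{w ∈ Suc_σ(y), w ≥ v} β(w) = 0. -/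

import Mathlib

open scoped Classical
open Finset

noncomputable section

/-- A linear extension of a finite poset, viewed as an order-preserving
bijection onto `Fin n`. -/
def IsLinExt {α : Type*} [PartialOrder α] {n : ℕ} (σ : α ≃ Fin n) : Prop :=
  ∀ a b : α, a ≤ b → σ a ≤ σ b

/-- The Cartan matrix of a finite poset with respect to a linear extension. -/
def cartan {α : Type*} [PartialOrder α] {n : ℕ} (σ : α ≃ Fin n) :
    Matrix (Fin n) (Fin n) ℂ :=
  fun i j => if σ.symm j ≤ σ.symm i then 1 else 0

/-- Upper-triangular matrices. -/
def IsUpperTri {n : ℕ} (U : Matrix (Fin n) (Fin n) ℂ) : Prop :=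
  ∀ i j : Fin n, j < i → U i j = 0

/-- The permutation matrix of `π`, with a `1` in row `i` and column `π i`. -/
def permMat {n : ℕ} (π : Equiv.Perm (Fin n)) : Matrix (Fin n) (Fin n) ℂ :=
  fun i j => if π i = j then 1 else 0

/-- `π` is the (unique) permutation indexing the Bruhat cell of `W`,
i.e. `W ∈ B (permMat π) B` with `B` the invertible upper-triangular matrices. -/
def IsBruhatPerm {n : ℕ} (W : Matrix (Fin n) (Fin n) ℂ) (π : Equiv.Perm (Fin n)) : Prop :=
  ∃ U₁ U₂ : Matrix (Fin n) (Fin n) ℂ,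
    IsUpperTri U₁ ∧ IsUpperTri U₂ ∧ IsUnit U₁.det ∧ IsUnit U₂.det ∧
      W = U₁ * permMat π * U₂

/-- Echelonmotion with respect to `σ`, given the Bruhat permutation `π` of the
Cartan matrix: `ech σ π x = y` iff `permMat π` has a `1` in row `σ y`, column `σ x`. -/
def ech {α : Type*} [PartialOrder α] {n : ℕ} (σ : α ≃ Fin n) (π : Equiv.Perm (Fin n)) :
    α → α := fun x => σ.symm (π⁻¹ (σ x))

end

open scoped Matrix

section Helpers

variable {n : ℕ}

lemma tri_bt {U : Matrix (Fin n) (Fin n) ℂ} (h : IsUpperTri U) :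
    U.BlockTriangular id := fun i j hij => h i j hij

lemma tri_diag_ne {U : Matrix (Fin n) (Fin n) ℂ} (h : IsUpperTri U)
    (hd : IsUnit U.det) (i : Fin n) : U i i ≠ 0 := by
  rw [Matrix.det_of_upperTriangular (tri_bt h)] at hd
  intro h0
  exact hd.ne_zero (Finset.prod_eq_zero (Finset.mem_univ i) h0)

lemma tri_inv {U : Matrix (Fin n) (Fin n) ℂ} (h : IsUpperTri U)
    (hd : IsUnit U.det) : IsUpperTri U⁻¹ := by
  haveI := U.invertibleOfIsUnitDet hd
  intro i j hij
  exact Matrix.blockTriangular_inv_of_blockTriangular (tri_bt h) hij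

lemma inv_det_unit {U : Matrix (Fin n) (Fin n) ℂ} (hd : IsUnit U.det) :
    IsUnit U⁻¹.det :=
  Matrix.isUnit_det_of_right_inverse (Matrix.nonsing_inv_mul U hd)

lemma inv_diag_ne {U : Matrix (Fin n) (Fin n) ℂ} (h : IsUpperTri U)
    (hd : IsUnit U.det) (i : Fin n) : U⁻¹ i i ≠ 0 :=
  tri_diag_ne (tri_inv h hd) (inv_det_unit hd) i

lemma permMat_mulVec (π : Equiv.Perm (Fin n)) (w : Fin n → ℂ) :
    permMat π *ᵥ w = fun i => w (π i) := by
  funext i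
  simp [permMat, Matrix.mulVec, dotProduct, ite_mul]

lemma vecMul_permMat (π : Equiv.Perm (Fin n)) (c : Fin n → ℂ) :
    c ᵥ* permMat π = fun j => c (π⁻¹ j) := by
  funext j
  have : ∀ i : Fin n, (π i = j) = (i = π⁻¹ j) := by
    intro i
    simp [Equiv.Perm.inv_def, Equiv.apply_eq_iff_eq_symm_apply]
  simp only [permMat, Matrix.vecMul, dotProduct, mul_ite, mul_one, mul_zero, this]
  simp

/-- Reverse direction: the vector/covector conditions force `π i0 = j0`. -/
lemma bruhat_rev {U₁ U₂ : Matrix (Fin n) (Fin n) ℂ}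
    (h₁ : IsUpperTri U₁) (h₂ : IsUpperTri U₂) (d₁ : IsUnit U₁.det) (d₂ : IsUnit U₂.det)
    (π : Equiv.Perm (Fin n)) {i0 j0 : Fin n} {v b : Fin n → ℂ}
    (hv0 : v j0 ≠ 0) (hvs : ∀ j, j0 < j → v j = 0)
    (hWv : ∀ i, i0 < i → ((U₁ * permMat π * U₂) *ᵥ v) i = 0)
    (hbs : ∀ i, i < i0 → b i = 0)
    (hbW0 : (b ᵥ* (U₁ * permMat π * U₂)) j0 ≠ 0)
    (hbW : ∀ j, j < j0 → (b ᵥ* (U₁ * permMat π * U₂)) j = 0) :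
    π i0 = j0 := by
  set w : Fin n → ℂ := U₂ *ᵥ v with hw
  have hwj0 : w j0 = U₂ j0 j0 * v j0 := by
    show ∑ k, U₂ j0 k * v k = _
    refine Finset.sum_eq_single_of_mem j0 (Finset.mem_univ _) ?_
    intro k _ hk
    rcases lt_or_gt_of_ne hk with hlt | hgt
    · rw [h₂ j0 k hlt, zero_mul]
    · rw [hvs k hgt, mul_zero]
  have hw0 : w j0 ≠ 0 := by
    rw [hwj0]; exact mul_ne_zero (tri_diag_ne h₂ d₂ j0) hv0
  have hWv' : (U₁ * permMat π * U₂) *ᵥ v = U₁ *ᵥ (fun i => w (π i)) := by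
    rw [← permMat_mulVec π w, hw, Matrix.mulVec_mulVec, Matrix.mulVec_mulVec]
  have key1 : ∀ i, i0 < i → w (π i) = 0 := by
    have hPw : (fun i => w (π i)) = U₁⁻¹ *ᵥ ((U₁ * permMat π * U₂) *ᵥ v) := by
      rw [hWv', Matrix.mulVec_mulVec, Matrix.nonsing_inv_mul _ d₁, Matrix.one_mulVec]
    intro i hi
    rw [show w (π i) = (U₁⁻¹ *ᵥ ((U₁ * permMat π * U₂) *ᵥ v)) i from congrFun hPw i]
    show ∑ k, U₁⁻¹ i k * ((U₁ * permMat π * U₂) *ᵥ v) k = 0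
    refine Finset.sum_eq_zero fun k _ => ?_
    rcases lt_or_ge k i with hlt | hle
    · rw [tri_inv h₁ d₁ i k hlt, zero_mul]
    · rw [hWv k (lt_of_lt_of_le hi hle), mul_zero]
  have hπle : π⁻¹ j0 ≤ i0 := by
    by_contra h
    push_neg at h
    have := key1 _ h
    rw [Equiv.Perm.inv_def, Equiv.apply_symm_apply] at this
    exact hw0 this
  set c : Fin n → ℂ := b ᵥ* U₁ with hc
  have hcs : ∀ i, i < i0 → c i = 0 := by
    intro i hi
    show ∑ k, b k * U₁ k i = 0
    refine Finset.sum_eq_zero fun k _ => ?_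
    rcases lt_or_ge k i0 with hlt | hle
    · rw [hbs k hlt, zero_mul]
    · rw [h₁ k i (lt_of_lt_of_le hi hle), mul_zero]
  have hbWeq : b ᵥ* (U₁ * permMat π * U₂) = (fun j => c (π⁻¹ j)) ᵥ* U₂ := by
    rw [← vecMul_permMat π c, hc, Matrix.vecMul_vecMul, Matrix.vecMul_vecMul,
      ← Matrix.mul_assoc]
  have key2 : ∀ j, j < j0 → c (π⁻¹ j) = 0 := by
    have hd : (fun j => c (π⁻¹ j)) = (b ᵥ* (U₁ * permMat π * U₂)) ᵥ* U₂⁻¹ := by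
      rw [hbWeq, Matrix.vecMul_vecMul, Matrix.mul_nonsing_inv _ d₂, Matrix.vecMul_one]
    intro j hj
    rw [show c (π⁻¹ j) = ((b ᵥ* (U₁ * permMat π * U₂)) ᵥ* U₂⁻¹) j from congrFun hd j]
    show ∑ k, (b ᵥ* (U₁ * permMat π * U₂)) k * U₂⁻¹ k j = 0
    refine Finset.sum_eq_zero fun k _ => ?_
    rcases lt_or_ge k j0 with hlt | hle
    · rw [hbW k hlt, zero_mul]
    · rw [tri_inv h₂ d₂ k j (lt_of_lt_of_le hj hle), mul_zero]
  have hcPj0 : c (π⁻¹ j0) ≠ 0 := by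
    intro h0
    apply hbW0
    rw [congrFun hbWeq j0]
    show ∑ k, c (π⁻¹ k) * U₂ k j0 = 0
    refine Finset.sum_eq_zero fun k _ => ?_
    rcases lt_trichotomy k j0 with hlt | heq | hgt
    · rw [key2 k hlt, zero_mul]
    · subst heq; rw [h0, zero_mul]
    · rw [h₂ k j0 hgt, mul_zero]
  have hπge : i0 ≤ π⁻¹ j0 := le_of_not_gt fun h => hcPj0 (hcs _ h)
  have : π⁻¹ j0 = i0 := le_antisymm hπle hπge
  rw [← this, Equiv.Perm.inv_def, Equiv.apply_symm_apply]

variable {α : Type*} [PartialOrder α] [Fintype α]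

/-- Translation of `(cartan σ *ᵥ v) (σ u)` into a filtered sum over the poset. -/
lemma sumA (σ : α ≃ Fin n) (x : α) (v : Fin n → ℂ)
    (hv : ∀ j, σ x < j → v j = 0) (u : α) :
    (cartan σ *ᵥ v) (σ u) =
      ∑ w ∈ Finset.univ.filter (fun w : α => σ w ≤ σ x ∧ w ≤ u), v (σ w) := by
  have h1 : (cartan σ *ᵥ v) (σ u) = ∑ j : Fin n, (if σ.symm j ≤ u then v j else 0) := by
    simp [cartan, Matrix.mulVec, dotProduct, ite_mul]
  have h2 : ∑ j : Fin n, (if σ.symm j ≤ u then v j else 0)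
      = ∑ w : α, (if w ≤ u then v (σ w) else 0) := by
    rw [← Equiv.sum_comp σ (fun j => if σ.symm j ≤ u then v j else 0)]
    simp
  rw [h1, h2, ← Finset.sum_filter]
  refine (Finset.sum_subset ?_ ?_).symm
  · intro w hw
    simp only [Finset.mem_filter, Finset.mem_univ, true_and] at hw ⊢
    exact hw.2
  · intro w hw hnw
    simp only [Finset.mem_filter, Finset.mem_univ, true_and] at hw hnw
    exact hv _ (lt_of_not_ge fun h => hnw ⟨h, hw⟩)

/-- Translation of `(b ᵥ* cartan σ) (σ v')` into a filtered sum over the poset. -/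
lemma sumB (σ : α ≃ Fin n) (y : α) (b : Fin n → ℂ)
    (hb : ∀ i, i < σ y → b i = 0) (v' : α) :
    (b ᵥ* cartan σ) (σ v') =
      ∑ w ∈ Finset.univ.filter (fun w : α => σ y ≤ σ w ∧ v' ≤ w), b (σ w) := by
  have h1 : (b ᵥ* cartan σ) (σ v') = ∑ i : Fin n, (if v' ≤ σ.symm i then b i else 0) := by
    simp [cartan, Matrix.vecMul, dotProduct, mul_ite, mul_one, mul_zero]
  have h2 : ∑ i : Fin n, (if v' ≤ σ.symm i then b i else 0)
      = ∑ w : α, (if v' ≤ w then b (σ w) else 0) := by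
    rw [← Equiv.sum_comp σ (fun i => if v' ≤ σ.symm i then b i else 0)]
    simp
  rw [h1, h2, ← Finset.sum_filter]
  refine (Finset.sum_subset ?_ ?_).symm
  · intro w hw
    simp only [Finset.mem_filter, Finset.mem_univ, true_and] at hw ⊢
    exact hw.2
  · intro w hw hnw
    simp only [Finset.mem_filter, Finset.mem_univ, true_and] at hw hnw
    exact hb _ (lt_of_not_ge fun h => hnw ⟨h, hw⟩)

end Helpers

/-- Characterization of echelonmotion in terms of labelings `ρ` of
`Pre_σ(x) = {w : σ w ≤ σ x}` and `β` of `Suc_σ(y) = {w : σ y ≤ σ w}`. -/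
theorem stmt14 {α : Type*} [PartialOrder α] [Fintype α] {n : ℕ}
    (σ : α ≃ Fin n) (hσ : IsLinExt σ)
    (π : Equiv.Perm (Fin n)) (hπ : IsBruhatPerm (cartan σ) π)
    (x y : α) :
    ech σ π x = y ↔
      ∃ ρ β : α → ℂ,
        ρ x ≠ 0 ∧
        β y ≠ 0 ∧
        (∑ w ∈ Finset.univ.filter (fun w : α => σ w ≤ σ x ∧ w ≤ y), ρ w) ≠ 0 ∧
        (∑ w ∈ Finset.univ.filter (fun w : α => σ y ≤ σ w ∧ x ≤ w), β w) ≠ 0 ∧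
        (∀ u : α, σ y ≤ σ u → u ≠ y →
          ∑ w ∈ Finset.univ.filter (fun w : α => σ w ≤ σ x ∧ w ≤ u), ρ w = 0) ∧
        (∀ v : α, σ v ≤ σ x → v ≠ x →
          ∑ w ∈ Finset.univ.filter (fun w : α => σ y ≤ σ w ∧ v ≤ w), β w = 0) := by
  obtain ⟨U₁, U₂, h₁, h₂, d₁, d₂, hW⟩ := hπ
  set i0 : Fin n := σ y with hi0
  set j0 : Fin n := σ x with hj0
  have hech : ech σ π x = y ↔ π i0 = j0 := by
    unfold ech
    rw [Equiv.symm_apply_eq, Equiv.Perm.inv_def, Equiv.symm_apply_eq]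
    exact ⟨fun h => h.symm, fun h => h.symm⟩
  rw [hech]
  constructor
  · intro hπ0
    have hπinv : π⁻¹ j0 = i0 := by rw [← hπ0, Equiv.Perm.inv_def, Equiv.symm_apply_apply]
    set v : Fin n → ℂ := U₂⁻¹ *ᵥ Pi.single j0 1 with hv
    set b : Fin n → ℂ := Pi.single i0 (1 : ℂ) ᵥ* U₁⁻¹ with hb
    have hvj : ∀ j, v j = U₂⁻¹ j j0 := by
      intro j; rw [hv, Matrix.mulVec_single]; simp
    have hbi : ∀ i, b i = U₁⁻¹ i0 i := by
      intro i; rw [hb, Matrix.single_vecMul]; simp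
    have hWv : cartan σ *ᵥ v = fun i => U₁ i i0 := by
      rw [hv, Matrix.mulVec_mulVec, hW,
        show U₁ * permMat π * U₂ * U₂⁻¹ = U₁ * permMat π by
          rw [Matrix.mul_assoc (U₁ * permMat π), Matrix.mul_nonsing_inv _ d₂, mul_one],
        Matrix.mulVec_single]
      funext i
      simp only [Pi.smul_apply, MulOpposite.op_one, one_smul, Matrix.col_apply]
      rw [Matrix.mul_apply]
      rw [Finset.sum_eq_single i0]
      · simp [permMat, hπ0]
      · intro k _ hk
        have : π k ≠ j0 := fun h => hk (π.injective (h.trans hπ0.symm))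
        simp [permMat, this]
      · intro h; exact absurd (Finset.mem_univ i0) h
    have hbW : b ᵥ* cartan σ = fun j => U₂ j0 j := by
      rw [hb, Matrix.vecMul_vecMul, hW, Matrix.mul_assoc U₁,
        Matrix.nonsing_inv_mul_cancel_left _ _ d₁,
        Matrix.single_vecMul]
      funext j
      simp only [Pi.smul_apply, one_smul, Matrix.row_apply]
      rw [Matrix.mul_apply]
      rw [Finset.sum_eq_single j0]
      · simp [permMat, hπ0]
      · intro k _ hk
        have : π i0 ≠ k := fun h => hk (hπ0 ▸ h.symm ▸ rfl)
        simp [permMat, this]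
      · intro h; exact absurd (Finset.mem_univ j0) h
    have hvsupp : ∀ j, j0 < j → v j = 0 := fun j hj => by
      rw [hvj]; exact tri_inv h₂ d₂ j j0 hj
    have hbsupp : ∀ i, i < i0 → b i = 0 := fun i hi => by
      rw [hbi]; exact tri_inv h₁ d₁ i0 i hi
    refine ⟨fun w => v (σ w), fun w => b (σ w), ?_, ?_, ?_, ?_, ?_, ?_⟩
    · show v (σ x) ≠ 0
      rw [hvj]; exact inv_diag_ne h₂ d₂ (σ x)
    · show b (σ y) ≠ 0
      rw [hbi]; exact inv_diag_ne h₁ d₁ (σ y)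
    · beta_reduce
      rw [← sumA σ x v hvsupp y, hWv]
      exact tri_diag_ne h₁ d₁ i0
    · beta_reduce
      rw [← sumB σ y b hbsupp x, hbW]
      exact tri_diag_ne h₂ d₂ j0
    · intro u hu hne
      beta_reduce
      rw [← sumA σ x v hvsupp u, hWv]
      exact h₁ (σ u) i0 (lt_of_le_of_ne hu (fun h => hne (σ.injective h.symm)))
    · intro v' hv' hne
      beta_reduce
      rw [← sumB σ y b hbsupp v', hbW]
      exact h₂ j0 (σ v') (lt_of_le_of_ne hv' (fun h => hne (σ.injective h)))
  · rintro ⟨ρ, β, hρx, hβy, hsx, hsy, hvan1, hvan2⟩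
    set v : Fin n → ℂ := fun j => if j ≤ j0 then ρ (σ.symm j) else 0 with hv
    set b : Fin n → ℂ := fun i => if i0 ≤ i then β (σ.symm i) else 0 with hb
    have hvsupp : ∀ j, j0 < j → v j = 0 := fun j hj => by
      rw [hv]; simp [not_le.mpr hj]
    have hbsupp : ∀ i, i < i0 → b i = 0 := fun i hi => by
      rw [hb]; simp [not_le.mpr hi]
    have hveq : ∀ u : α,
        ∑ w ∈ Finset.univ.filter (fun w : α => σ w ≤ σ x ∧ w ≤ u), v (σ w)
          = ∑ w ∈ Finset.univ.filter (fun w : α => σ w ≤ σ x ∧ w ≤ u), ρ w := by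
      intro u
      refine Finset.sum_congr rfl fun w hw => ?_
      simp only [Finset.mem_filter, Finset.mem_univ, true_and] at hw
      rw [hv]; simp [hj0, hw.1]
    have hbeq : ∀ v' : α,
        ∑ w ∈ Finset.univ.filter (fun w : α => σ y ≤ σ w ∧ v' ≤ w), b (σ w)
          = ∑ w ∈ Finset.univ.filter (fun w : α => σ y ≤ σ w ∧ v' ≤ w), β w := by
      intro v'
      refine Finset.sum_congr rfl fun w hw => ?_
      simp only [Finset.mem_filter, Finset.mem_univ, true_and] at hw
      rw [hb]; simp [hi0, hw.1]
    apply bruhat_rev h₁ h₂ d₁ d₂ π (v := v) (b := b)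
    · rw [hv]; simpa [hj0] using hρx
    · exact hvsupp
    · intro i hi
      rw [← hW]
      have : i = σ (σ.symm i) := (Equiv.apply_symm_apply σ i).symm
      rw [this, sumA σ x v hvsupp (σ.symm i), hveq]
      refine hvan1 _ ?_ ?_
      · rw [← this]; exact le_of_lt hi
      · intro h
        have he : i = i0 := by rw [hi0, ← h, Equiv.apply_symm_apply]
        rw [he] at hi; exact lt_irrefl _ hi
    · exact hbsupp
    · rw [← hW]
      have hx : j0 = σ x := rfl
      rw [show (j0 : Fin n) = σ x from rfl, sumB σ y b hbsupp x, hbeq]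
      exact hsy
    · intro j hj
      rw [← hW]
      have : j = σ (σ.symm j) := (Equiv.apply_symm_apply σ j).symm
      rw [this, sumB σ y b hbsupp (σ.symm j), hbeq]
      refine hvan2 _ ?_ ?_
      · rw [← this]; exact le_of_lt hj
      · intro h
        have he : j = j0 := by rw [hj0, ← h, Equiv.apply_symm_apply]
        rw [he] at hj; exact lt_irrefl _ hj
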